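/- Let G be the graph obtained from the complete graph K_{k+2} on vertices {r,1,...,k+1} (k ≥ 1) by adding a vertex t0 adjacent to 1,...,k+1 and, for each 1 ≤ i ≤ k+1, a vertex t_i adjacent to t0 and i. Then G is chordal. -/

import Mathlib

open SimpleGraph

/-- Vertices: the root `r`, clique vertices `base 1, ..., base (k+1)`,
the vertex `t0`, and the vertices `t i` for 1 ≤ i ≤ k+1. -/
inductive GVtx (k : ℕ) : Type
  | r : GVtx k
  | base : Fin (k + 1) → GVtx k
  | t0 : GVtx k
  | t : Fin (k + 1) → GVtx k

/-- K_{k+2} on {r, 1, ..., k+1}, plus t0 adjacent to 1,...,k+1,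
plus t_i adjacent to t0 and i. -/
def gadgetRel (k : ℕ) : GVtx k → GVtx k → Prop
  | .r, .base _ => True
  | .base _, .base _ => True
  | .t0, .base _ => True
  | .t i, .base j => i = j
  | .t _, .t0 => True
  | _, _ => False

def gadgetG (k : ℕ) : SimpleGraph (GVtx k) := SimpleGraph.fromRel (gadgetRel k)

/-- A graph is chordal iff it has no induced cycle of length ≥ 4. -/
def IsChordal {V : Type} (G : SimpleGraph V) : Prop :=
  ∀ n : ℕ, 4 ≤ n → IsEmpty (SimpleGraph.cycleGraph n ↪g G)

open Fin.CommRing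

-- auxiliary numeral facts in `Fin (m+4)`
lemma finAux2 (m : ℕ) : (2 : Fin (m+4)) ≠ 0 := by
  intro h
  rw [Fin.ext_iff, show ((2 : Fin (m+4)) : ℕ) = 2 % (m+4) from rfl] at h
  simp [Nat.mod_eq_of_lt] at h

lemma finAux21 (m : ℕ) : (2 : Fin (m+4)) ≠ 1 := by
  intro h
  have h3 : (1 : Fin (m+4)) = 0 := by linear_combination h
  rw [Fin.ext_iff, show ((1 : Fin (m+4)) : ℕ) = 1 % (m+4) from rfl] at h3
  simp [Nat.mod_eq_of_lt] at h3

lemma finAuxNeg2 (m : ℕ) : (-2 : Fin (m+4)) ≠ 1 := by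
  intro h
  have h3 : (3 : Fin (m+4)) = 0 := by linear_combination -h
  rw [Fin.ext_iff, show ((3 : Fin (m+4)) : ℕ) = 3 % (m+4) from rfl] at h3
  simp [Nat.mod_eq_of_lt] at h3

-- neighbors of r are base vertices
lemma nbr_r {k : ℕ} {v : GVtx k} (h : (gadgetG k).Adj .r v) : ∃ j, v = .base j := by
  cases v <;> simp [gadgetG, gadgetRel] at h <;> exact ⟨_, rfl⟩

-- neighbors of t i are base i or t0
lemma nbr_t {k : ℕ} {i : Fin (k+1)} {v : GVtx k} (h : (gadgetG k).Adj (.t i) v) :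
    v = .base i ∨ v = .t0 := by
  cases v <;> simp [gadgetG, gadgetRel] at h
  · left; rw [h]
  · right; rfl

-- bases and t0 form a clique
lemma clique_adj {k : ℕ} {a b : GVtx k}
    (ha : (∃ j, a = .base j) ∨ a = .t0) (hb : (∃ j, b = .base j) ∨ b = .t0)
    (hab : a ≠ b) : (gadgetG k).Adj a b := by
  rcases ha with ⟨j, rfl⟩ | rfl
  · rcases hb with ⟨j', rfl⟩ | rfl
    · exact ⟨hab, Or.inl trivial⟩
    · exact ⟨hab, Or.inr trivial⟩
  · rcases hb with ⟨j', rfl⟩ | rfl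
    · exact ⟨hab, Or.inl trivial⟩
    · exact absurd rfl hab

theorem stmt1 : ∀ k : ℕ, 1 ≤ k → IsChordal (gadgetG k) := by
  intro k _ n hn
  obtain ⟨m, rfl⟩ : ∃ m, n = m + 4 := ⟨n - 4, by omega⟩
  constructor
  intro f
  -- every vertex on the cycle is a base vertex or t0
  have key : ∀ p : Fin (m + 4), (∃ j, f p = .base j) ∨ f p = .t0 := by
    intro p
    have hne : p - 1 ≠ p + 1 := by
      intro h
      exact finAux2 m (by linear_combination -h)
    have hnadj : ¬ (gadgetG k).Adj (f (p - 1)) (f (p + 1)) := by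
      rw [f.map_adj_iff, cycleGraph_adj]
      rintro (h | h)
      · exact finAuxNeg2 m (by linear_combination h)
      · exact finAux21 m (by linear_combination h)
    have h1 : (gadgetG k).Adj (f p) (f (p - 1)) := by
      rw [f.map_adj_iff, cycleGraph_adj]; left; ring
    have h2 : (gadgetG k).Adj (f p) (f (p + 1)) := by
      rw [f.map_adj_iff, cycleGraph_adj]; right; ring
    have hfne : f (p - 1) ≠ f (p + 1) := fun h => hne (f.injective h)
    match hfp : f p with
    | .base j => exact Or.inl ⟨j, rfl⟩
    | .t0 => exact Or.inr rfl
    | .r =>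
        rw [hfp] at h1 h2
        obtain ⟨j1, e1⟩ := nbr_r h1
        obtain ⟨j2, e2⟩ := nbr_r h2
        exact (hnadj (by
          rw [e1, e2]
          exact clique_adj (Or.inl ⟨j1, rfl⟩) (Or.inl ⟨j2, rfl⟩) (e1 ▸ e2 ▸ hfne))).elim
    | .t i =>
        rw [hfp] at h1 h2
        rcases nbr_t h1 with e1 | e1 <;> rcases nbr_t h2 with e2 | e2
        · exact (hfne (e1.trans e2.symm)).elim
        · exact (hnadj (by
            rw [e1, e2]
            exact clique_adj (Or.inl ⟨i, rfl⟩) (Or.inr rfl) (by simp))).elim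
        · exact (hnadj (by
            rw [e1, e2]
            exact clique_adj (Or.inr rfl) (Or.inl ⟨i, rfl⟩) (by simp))).elim
        · exact (hfne (e1.trans e2.symm)).elim
  -- but then f 0 and f 2 would be adjacent, contradiction
  have h02 : (0 : Fin (m + 4)) ≠ 2 := fun h => finAux2 m (by linear_combination -h)
  have hfne : f 0 ≠ f 2 := fun h => h02 (f.injective h)
  have hadj : (gadgetG k).Adj (f 0) (f 2) := clique_adj (key 0) (key 2) hfne
  rw [f.map_adj_iff, cycleGraph_adj] at hadj
  rcases hadj with h | h
  · exact finAuxNeg2 m (by linear_combination h)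
  · exact finAux21 m (by linear_combination h)
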